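/- Nondecreasing integral comparison: if f : [1,∞) → ℝ is monotone nondecreasing, the improper integral ∫₁^∞ (f(x) − αx)/x² dx converges, and α > 0, then f(x)/x → α as x → ∞. -/

import Mathlib

set_option maxHeartbeats 1000000

open Filter MeasureTheory in
lemma aux_integrable (f : ℝ → ℝ) (hf : MonotoneOn f (Set.Ici 1)) (α : ℝ)
    {a b : ℝ} (ha : 1 ≤ a) (hab : a ≤ b) :
    IntervalIntegrable (fun x => (f x - α * x) / x ^ 2) volume a b := by
  have hsub : Set.uIcc a b ⊆ Set.Ici 1 := by
    rw [Set.uIcc_of_le hab]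
    exact fun x hx => le_trans ha hx.1
  have h1 : IntervalIntegrable f volume a b :=
    (hf.mono hsub).intervalIntegrable
  have h2 : IntervalIntegrable (fun x => f x - α * x) volume a b :=
    h1.sub ((continuous_const.mul continuous_id).intervalIntegrable a b)
  have hcont : ContinuousOn (fun x : ℝ => (x ^ 2)⁻¹) (Set.uIcc a b) := by
    apply ContinuousOn.inv₀ (continuous_pow 2).continuousOn
    intro x hx
    have hx1 : (1:ℝ) ≤ x := hsub hx
    exact pow_ne_zero 2 (by linarith)
  simpa only [div_eq_mul_inv] using h2.mul_continuousOn hcont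

open Filter in
theorem monotone_of_integral_convergence
    (f : ℝ → ℝ) (hf : MonotoneOn f (Set.Ici 1)) (α : ℝ) (hα : 0 < α)
    (hconv : ∃ L : ℝ,
      Tendsto (fun b : ℝ => ∫ x in Set.Ioc (1 : ℝ) b, (f x - α * x) / x ^ 2)
        atTop (nhds L)) :
    Tendsto (fun x : ℝ => f x / x) atTop (nhds α) := by
  obtain ⟨L, hL⟩ := hconv
  set g : ℝ → ℝ := fun b => ∫ x in Set.Ioc (1:ℝ) b, (f x - α * x) / x ^ 2 with hgdef
  have hdiff : ∀ a b : ℝ, 1 ≤ a → a ≤ b →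
      g b - g a = ∫ x in a..b, (f x - α * x) / x ^ 2 := by
    intro a b ha hab
    have h1 : g a = ∫ x in (1:ℝ)..a, (f x - α * x) / x ^ 2 :=
      (intervalIntegral.integral_of_le ha).symm
    have h2 : g b = ∫ x in (1:ℝ)..b, (f x - α * x) / x ^ 2 :=
      (intervalIntegral.integral_of_le (le_trans ha hab)).symm
    rw [h1, h2, ← intervalIntegral.integral_add_adjacent_intervals
      (aux_integrable f hf α le_rfl ha) (aux_integrable f hf α ha hab)]
    ring
  rw [Metric.tendsto_nhds]
  intro ε hε
  set ε0 : ℝ := min ε α with hε0def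
  have hε0 : 0 < ε0 := lt_min hε hα
  have hε0α : ε0 ≤ α := min_le_right _ _
  have hε0ε : ε0 ≤ ε := min_le_left _ _
  clear_value ε0
  -- Upper bound: eventually f x < (α + ε0) * x
  have hupper : ∀ᶠ x in atTop, f x < (α + ε0) * x := by
    by_contra hcon
    rw [Filter.not_eventually] at hcon
    set c : ℝ := 1 + ε0 / (2 * α) with hcdef
    have hc1 : 1 < c := by
      have : 0 < ε0 / (2 * α) := div_pos hε0 (by linarith)
      simp only [hcdef]; linarith
    have hc0 : 0 < c := by linarith
    have hαc : α * c = α + ε0 / 2 := by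
      field_simp [hcdef]
      rw [hcdef]
      field_simp
    clear_value c
    set δ : ℝ := (c - 1) * ε0 / (2 * c ^ 2) with hδdef
    have hδpos : 0 < δ := by
      apply div_pos (mul_pos (by linarith) hε0)
      positivity
    clear_value δ
    have htends : Tendsto (fun x => g (c * x) - g x) atTop (nhds 0) := by
      have h1 : Tendsto (fun x : ℝ => g (c * x)) atTop (nhds L) :=
        hL.comp (tendsto_id.const_mul_atTop hc0)
      simpa using h1.sub hL
    have hev : ∀ᶠ x in atTop, |g (c * x) - g x| < δ := by
      have := Metric.tendsto_nhds.mp htends δ hδpos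
      simpa [Real.dist_eq] using this
    obtain ⟨x, hxbad, hx1, hxev⟩ :=
      (hcon.and_eventually ((eventually_ge_atTop (1:ℝ)).and hev)).exists
    push_neg at hxbad
    have hx0 : (0:ℝ) < x := by linarith
    have hxcx : x ≤ c * x := by nlinarith
    have hptwise : ∀ t ∈ Set.Icc x (c * x),
        ε0 / (2 * c ^ 2 * x) ≤ (f t - α * t) / t ^ 2 := by
      intro t ht
      have ht1 : (1:ℝ) ≤ t := le_trans hx1 ht.1
      have ht0 : (0:ℝ) < t := by linarith
      have hftx : f x ≤ f t := hf (by exact hx1) (by exact ht1) ht.1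
      have hαt : α * t ≤ α * (c * x) := mul_le_mul_of_nonneg_left ht.2 hα.le
      have hacx : α * (c * x) = (α + ε0 / 2) * x := by rw [← mul_assoc, hαc]
      have hnum : ε0 * x / 2 ≤ f t - α * t := by linarith
      rw [div_le_div_iff₀ (by positivity) (by positivity)]
      have h1 : ε0 * (t * t) ≤ ε0 * ((c * x) * (c * x)) :=
        mul_le_mul_of_nonneg_left
          (mul_le_mul ht.2 ht.2 ht0.le (by positivity)) hε0.le
      have h2 : (ε0 * x / 2) * (2 * c ^ 2 * x) ≤ (f t - α * t) * (2 * c ^ 2 * x) :=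
        mul_le_mul_of_nonneg_right hnum (by positivity)
      nlinarith [h1, h2]
    have hconst : (∫ _ in x..(c*x), (ε0 / (2 * c ^ 2 * x)) : ℝ)
        = (c * x - x) * (ε0 / (2 * c ^ 2 * x)) := by
      rw [intervalIntegral.integral_const, smul_eq_mul]
    have hmono := intervalIntegral.integral_mono_on hxcx
      (intervalIntegrable_const) (aux_integrable f hf α hx1 hxcx) hptwise
    have hval : (c * x - x) * (ε0 / (2 * c ^ 2 * x)) = δ := by
      rw [hδdef]
      field_simp
    rw [← hdiff x (c*x) hx1 hxcx] at hmono
    rw [hconst, hval] at hmono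
    have := abs_lt.mp hxev
    linarith [this.2]
  -- Lower bound: eventually (α - ε0) * x < f x
  have hlower : ∀ᶠ x in atTop, (α - ε0) * x < f x := by
    by_contra hcon
    rw [Filter.not_eventually] at hcon
    set c : ℝ := α / (α - ε0 / 2) with hcdef
    have hden : 0 < α - ε0 / 2 := by linarith
    have hc1 : 1 < c := by
      rw [hcdef, lt_div_iff₀ hden]
      linarith
    have hc0 : 0 < c := by linarith
    have hαc : α / c = α - ε0 / 2 := by
      rw [hcdef]
      field_simp
    clear_value c
    set δ : ℝ := (1 - 1 / c) * ε0 / 2 with hδdef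
    have hc1inv : 1 / c < 1 := by
      rw [div_lt_one hc0]; exact hc1
    have hδpos : 0 < δ := by
      apply div_pos (mul_pos (by linarith) hε0)
      norm_num
    clear_value δ
    have htends : Tendsto (fun x => g x - g (x / c)) atTop (nhds 0) := by
      have h1 : Tendsto (fun x : ℝ => g (x / c)) atTop (nhds L) := by
        apply hL.comp
        simpa [div_eq_inv_mul] using
          tendsto_id.const_mul_atTop (show (0:ℝ) < c⁻¹ by positivity)
      simpa using hL.sub h1
    have hev : ∀ᶠ x in atTop, |g x - g (x / c)| < δ := by
      have := Metric.tendsto_nhds.mp htends δ hδpos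
      simpa [Real.dist_eq] using this
    obtain ⟨x, hxbad, hxc, hxev⟩ :=
      (hcon.and_eventually ((eventually_ge_atTop c).and hev)).exists
    push_neg at hxbad
    have hx1 : (1:ℝ) ≤ x := le_trans hc1.le hxc
    have hx0 : (0:ℝ) < x := by linarith
    have hxc1 : (1:ℝ) ≤ x / c := (one_le_div hc0).mpr hxc
    have hxcx : x / c ≤ x := by
      rw [div_le_iff₀ hc0]; nlinarith
    have hptwise : ∀ t ∈ Set.Icc (x / c) x,
        (f t - α * t) / t ^ 2 ≤ -(ε0 / (2 * x)) := by
      intro t ht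
      have ht1 : (1:ℝ) ≤ t := le_trans hxc1 ht.1
      have ht0 : (0:ℝ) < t := by linarith
      have hftx : f t ≤ f x := hf (by exact ht1) (by exact hx1) ht.2
      have hαt : α * (x / c) ≤ α * t := mul_le_mul_of_nonneg_left ht.1 hα.le
      have hxdc : α * (x / c) = (α - ε0 / 2) * x := by
        rw [mul_div_assoc', mul_comm α x, mul_div_assoc, hαc]
        ring
      have hnum : f t - α * t ≤ -(ε0 * x / 2) := by linarith
      rw [div_le_iff₀ (by positivity)]
      have ht2 : t ^ 2 ≤ x ^ 2 := by nlinarith [ht.2, ht0]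
      have h1 : (ε0 / (2 * x)) * t ^ 2 ≤ (ε0 / (2 * x)) * x ^ 2 :=
        mul_le_mul_of_nonneg_left ht2 (by positivity)
      have h2 : (ε0 / (2 * x)) * x ^ 2 = ε0 * x / 2 := by
        field_simp
      linarith
    have hconst : (∫ _ in (x/c)..x, (-(ε0 / (2 * x))) : ℝ)
        = (x - x / c) * (-(ε0 / (2 * x))) := by
      rw [intervalIntegral.integral_const, smul_eq_mul]
    have hmono := intervalIntegral.integral_mono_on hxcx
      (aux_integrable f hf α hxc1 hxcx) (intervalIntegrable_const) hptwise
    have hval : (x - x / c) * (-(ε0 / (2 * x))) = -δ := by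
      rw [hδdef]
      field_simp
    rw [← hdiff (x/c) x hxc1 hxcx] at hmono
    rw [hconst, hval] at hmono
    have := abs_lt.mp hxev
    linarith [this.1]
  filter_upwards [hupper, hlower, eventually_ge_atTop (1:ℝ)] with x h1 h2 h3
  have hx0 : (0:ℝ) < x := by linarith
  rw [Real.dist_eq, abs_lt]
  constructor
  · have : α - ε0 < f x / x := by
      rw [lt_div_iff₀ hx0]; linarith
    linarith
  · have : f x / x < α + ε0 := by
      rw [div_lt_iff₀ hx0]; linarith
    linarith
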